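/- For α a root of α^2 - 2α - 1 = 0 (i.e., α = 1 ± √2), the quartic F_α(z0,z1,z3) = z0^4 + z1^4 + (1+α^4) z3^4 - 6(α^2 z3^4 + (α^2+1)(z0^2+z1^2) z3^2 + z0^2 z1^2) has (0,0,1) as its only singular point up to scaling: if F_α and its three partial derivatives vanish at (z0,z1,z3) ∈ ℂ^3 with (z0,z1,z3) ≠ 0, then z0 = z1 = 0. -/
import Mathlib


noncomputable def Fq (t z0 z1 z3 : ℂ) : ℂ :=
  z0^4 + z1^4 + (1 + t^4) * z3^4
    - 6 * (t^2 * z3^4 + (t^2 + 1) * (z0^2 + z1^2) * z3^2 + z0^2 * z1^2)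

noncomputable def Fq0 (t z0 z1 z3 : ℂ) : ℂ :=
  4*z0^3 - 12*(t^2 + 1)*z0*z3^2 - 12*z0*z1^2

noncomputable def Fq1 (t z0 z1 z3 : ℂ) : ℂ :=
  4*z1^3 - 12*(t^2 + 1)*z1*z3^2 - 12*z1*z0^2

noncomputable def Fq3 (t z0 z1 z3 : ℂ) : ℂ :=
  4*(1 + t^4)*z3^3 - 24*t^2*z3^3 - 12*(t^2 + 1)*(z0^2 + z1^2)*z3

/-- For `α` with `α^2 = 2α + 1` (i.e. `α = 1 ± √2`), the only singular point of the
quartic `F_α = 0` up to scaling is `(0:0:1)`: any nonzero common zero of `F_α` and its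
partial derivatives has `z0 = z1 = 0`. -/
theorem unique_singularity_g1 (α z0 z1 z3 : ℂ) (hα : α^2 = 2*α + 1)
    (hF : Fq α z0 z1 z3 = 0)
    (h0 : Fq0 α z0 z1 z3 = 0) (h1 : Fq1 α z0 z1 z3 = 0) (h3 : Fq3 α z0 z1 z3 = 0)
    (hne : (z0, z1, z3) ≠ (0, 0, 0)) :
    z0 = 0 ∧ z1 = 0 := by
  simp only [Fq, Fq0, Fq1, Fq3] at hF h0 h1 h3
  have hα1 : α + 1 ≠ 0 := by
    intro h
    have hα' : α = -1 := by linear_combination h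
    rw [hα'] at hα
    norm_num at hα
  have hS : (z0^2 + z1^2) * z3 = 0 := by
    have key : (α + 1) * ((z0^2 + z1^2) * z3) = 0 := by
      linear_combination (-(1/24 : ℂ))*h3 +
        ((1/6 : ℂ)*(α^2+2*α-1)*z3^3 - (1/2 : ℂ)*(z0^2+z1^2)*z3)*hα
    exact (mul_eq_zero.mp key).resolve_left hα1
  rcases mul_eq_zero.mp hS with hS0 | hz3
  · -- z0^2 + z1^2 = 0
    have hz0 : z0 = 0 := by
      by_contra h
      have hz1 : z1 ≠ 0 := by
        intro h1'
        apply h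
        have hq : z0 ^ 2 = 0 := by rw [h1'] at hS0; simpa using hS0
        exact pow_eq_zero_iff (n := 2) (by norm_num) |>.mp hq
      have e0 : z0 * (16*z0^2 - 12*(α^2+1)*z3^2) = 0 := by
        linear_combination h0 + 12*z0*hS0
      have e1 : z1 * (16*z1^2 - 12*(α^2+1)*z3^2) = 0 := by
        linear_combination h1 + 12*z1*hS0
      have e0' : 16*z0^2 - 12*(α^2+1)*z3^2 = 0 := (mul_eq_zero.mp e0).resolve_left h
      have e1' : 16*z1^2 - 12*(α^2+1)*z3^2 = 0 := (mul_eq_zero.mp e1).resolve_left hz1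
      have : z0 ^ 2 = 0 := by linear_combination (1/32 : ℂ)*e0' - (1/32 : ℂ)*e1' + (1/2 : ℂ)*hS0
      exact h (pow_eq_zero_iff (n := 2) (by norm_num) |>.mp this)
    have hz1 : z1 = 0 := by
      have : z1 ^ 2 = 0 := by rw [hz0] at hS0; simpa using hS0
      exact pow_eq_zero_iff (n := 2) (by norm_num) |>.mp this
    exact ⟨hz0, hz1⟩
  · -- z3 = 0
    subst hz3
    have hz0 : z0 = 0 := by
      by_contra h
      have e0 : z0 * (4*z0^2 - 12*z1^2) = 0 := by linear_combination h0
      have e1 : z1 * (4*z1^2 - 12*z0^2) = 0 := by linear_combination h1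
      have e0' : 4*z0^2 - 12*z1^2 = 0 := (mul_eq_zero.mp e0).resolve_left h
      rcases mul_eq_zero.mp e1 with h1' | e1'
      · have : z0 ^ 2 = 0 := by rw [h1'] at e0'; linear_combination (1/4:ℂ)*e0'
        exact h (pow_eq_zero_iff (n := 2) (by norm_num) |>.mp this)
      · have : z0 ^ 2 = 0 := by linear_combination (-(1/32:ℂ))*e0' - (3/32:ℂ)*e1'
        exact h (pow_eq_zero_iff (n := 2) (by norm_num) |>.mp this)
    have hz1 : z1 = 0 := by
      rw [hz0] at h1
      have : z1 ^ 3 = 0 := by linear_combination (1/4:ℂ)*h1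
      exact pow_eq_zero_iff (n := 3) (by norm_num) |>.mp this
    exact ⟨hz0, hz1⟩
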